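/- (Lower bound on the empirical Gram matrix under well-explored covariance.) There exists an absolute constant c' > 0 such that the following holds: if φ_1, ..., φ_n are i.i.d. random vectors in R^d with ‖φ_i‖ ≤ 1 almost surely and E[φ_1 φ_1ᵀ] ⪰ b I_d for some b ∈ (0, 1], then with probability at least 1 − d·exp(−c' n b²), the empirical Gram matrix satisfies Σ_{i=1}^n φ_i φ_iᵀ ⪰ (n b / 2) I_d in the Loewner order. -/

import Mathlib

/-!
STATEMENT 13 (Lower bound on the empirical Gram matrix under well-explored covariance).
-/

open Matrix MeasureTheory ProbabilityTheory

noncomputable section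

open Metric Module
open scoped ENNReal

/- ## Auxiliary lemmas -/

lemma chernoff_lower {Ω : Type} [MeasurableSpace Ω] (P : Measure Ω) [IsProbabilityMeasure P]
    {n : ℕ} (X : Fin n → Ω → ℝ) (hX : ∀ i, Measurable (X i))
    (hind : iIndepFun X P)
    (hbdd : ∀ i, ∀ᵐ ω ∂P, X i ω ∈ Set.Icc (0:ℝ) 1)
    {b : ℝ} (hb0 : 0 ≤ b) (hb1 : b ≤ 1) (hmean : ∀ i, b ≤ ∫ ω, X i ω ∂P) (a : ℝ) :
    (P {ω | (∑ i, X i) ω ≤ a}).toReal ≤ Real.exp (Real.log (4/3) * a - n * b / 4) := by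
  set θ : ℝ := Real.log (4/3) with hθdef
  have hθ0 : 0 ≤ θ := Real.log_nonneg (by norm_num)
  have hexpθ : Real.exp (-θ) = 3/4 := by
    rw [Real.exp_neg, Real.exp_log (by norm_num)]; norm_num
  have hintX : ∀ i, Integrable (fun ω => Real.exp (-θ * X i ω)) P := by
    intro i
    refine Integrable.mono' (integrable_const 1) ((((hX i).const_mul (-θ)).exp).aestronglyMeasurable) ?_
    filter_upwards [hbdd i] with ω hω
    rw [Real.norm_eq_abs, abs_of_nonneg (Real.exp_pos _).le]
    rw [← Real.exp_zero]
    apply Real.exp_le_exp.2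
    nlinarith [hω.1]
  have hmgf : ∀ i, mgf (X i) P (-θ) ≤ Real.exp (-(b/4)) := by
    intro i
    have hXint : Integrable (X i) P := by
      refine Integrable.mono' (integrable_const 1) (hX i).aestronglyMeasurable ?_
      filter_upwards [hbdd i] with ω hω
      rw [Real.norm_eq_abs, abs_le]; exact ⟨by linarith [hω.1], hω.2⟩
    have h1 : mgf (X i) P (-θ) ≤ ∫ ω, (1 - X i ω / 4) ∂P := by
      refine integral_mono_ae (hintX i) (by exact (integrable_const 1).sub (hXint.div_const 4)) ?_
      filter_upwards [hbdd i] with ω hω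
      have hcvx := convexOn_exp.2 (Set.mem_univ (0:ℝ)) (Set.mem_univ (-θ))
        (by linarith [hω.2] : (0:ℝ) ≤ 1 - X i ω) hω.1 (by ring)
      simp only [smul_eq_mul, mul_zero, zero_add, Real.exp_zero, mul_one] at hcvx
      calc Real.exp (-θ * X i ω) = Real.exp (X i ω * (-θ)) := by ring_nf
        _ ≤ (1 - X i ω) + X i ω * Real.exp (-θ) := hcvx
        _ = 1 - X i ω / 4 := by rw [hexpθ]; ring
    have h2 : ∫ ω, (1 - X i ω / 4) ∂P = 1 - (∫ ω, X i ω ∂P) / 4 := by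
      rw [integral_sub (integrable_const 1) (hXint.div_const 4), integral_const]
      simp [integral_div]
    have h3 : 1 - (∫ ω, X i ω ∂P) / 4 ≤ 1 - b / 4 := by linarith [hmean i]
    calc mgf (X i) P (-θ) ≤ 1 - b/4 := le_trans h1 (h2 ▸ h3)
      _ ≤ Real.exp (-(b/4)) := by
          have := Real.add_one_le_exp (-(b/4)); linarith
  have hSfun : (∑ i : Fin n, X i) = fun ω => ∑ i, X i ω := by
    funext ω; exact Finset.sum_apply ω Finset.univ X
  have hS : (P {ω | (∑ i, X i) ω ≤ a}).toReal ≤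
      Real.exp (-(-θ) * a) * mgf (∑ i, X i) P (-θ) := by
    refine measure_le_le_exp_mul_mgf a (by linarith) ?_
    rw [hSfun]
    refine Integrable.mono' (integrable_const 1)
      (((Finset.measurable_sum Finset.univ (fun i _ => hX i)).const_mul (-θ)).exp).aestronglyMeasurable ?_
    have hall : ∀ᵐ ω ∂P, ∀ i, X i ω ∈ Set.Icc (0:ℝ) 1 := (ae_all_iff).2 hbdd
    filter_upwards [hall] with ω hω
    rw [Real.norm_eq_abs, abs_of_nonneg (Real.exp_pos _).le, ← Real.exp_zero]
    apply Real.exp_le_exp.2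
    have : (0:ℝ) ≤ ∑ i, X i ω := Finset.sum_nonneg fun i _ => (hω i).1
    nlinarith
  have hmgfsum : mgf (∑ i, X i) P (-θ) = ∏ i, mgf (X i) P (-θ) :=
    hind.mgf_sum hX Finset.univ
  have hprod : ∏ i, mgf (X i) P (-θ) ≤ Real.exp (-(b/4)) ^ n := by
    calc ∏ i, mgf (X i) P (-θ) ≤ ∏ _i : Fin n, Real.exp (-(b/4)) :=
          Finset.prod_le_prod (fun i _ => mgf_nonneg) (fun i _ => hmgf i)
      _ = Real.exp (-(b/4)) ^ n := by rw [Finset.prod_const, Finset.card_univ, Fintype.card_fin]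
  calc (P {ω | (∑ i, X i) ω ≤ a}).toReal
      ≤ Real.exp (-(-θ) * a) * mgf (∑ i, X i) P (-θ) := hS
    _ ≤ Real.exp (θ * a) * Real.exp (-(b/4)) ^ n := by
        rw [neg_neg]
        exact mul_le_mul_of_nonneg_left (hmgfsum ▸ hprod) (Real.exp_pos _).le
    _ = Real.exp (θ * a - n * b / 4) := by
        rw [← Real.exp_nat_mul, ← Real.exp_add]
        congr 1; ring

lemma sep_card_bound {d : ℕ} (hd : 0 < d) {ε : ℝ} (hε : 0 < ε)
    (S : Finset (EuclideanSpace ℝ (Fin d)))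
    (hS1 : ∀ u ∈ S, ‖u‖ = 1)
    (hsep : ∀ u ∈ S, ∀ v ∈ S, u ≠ v → ε ≤ dist u v) :
    (S.card : ℝ) ≤ (1 + 2/ε)^d := by
  haveI : Nonempty (Fin d) := ⟨⟨0, hd⟩⟩
  haveI : Nontrivial (EuclideanSpace ℝ (Fin d)) := by
    refine ⟨0, EuclideanSpace.single ⟨0, hd⟩ (1:ℝ), ?_⟩
    intro h
    have h2 := congrArg (fun x => ‖x‖) h
    simp only [norm_zero] at h2
    rw [EuclideanSpace.norm_single] at h2
    norm_num at h2
  set μ : Measure (EuclideanSpace ℝ (Fin d)) := volume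
  have hdisj : Set.PairwiseDisjoint (↑S) (fun u : EuclideanSpace ℝ (Fin d) => ball u (ε/2)) := by
    intro u hu v hv huv
    have h := hsep u (Finset.mem_coe.1 hu) v (Finset.mem_coe.1 hv) huv
    have hd2 : Disjoint (ball u (ε/2)) (ball v (ε/2)) := ball_disjoint_ball (by linarith)
    exact hd2
  have hsub : (⋃ u ∈ S, ball u (ε/2)) ⊆ ball (0:EuclideanSpace ℝ (Fin d)) (1 + ε/2) := by
    intro y hy
    simp only [Set.mem_iUnion] at hy
    obtain ⟨u, hu, hyu⟩ := hy
    rw [mem_ball] at hyu ⊢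
    calc dist y 0 ≤ dist y u + dist u 0 := dist_triangle _ _ _
      _ < ε/2 + 1 := by
          have : dist u 0 = 1 := by rw [dist_zero_right]; exact hS1 u hu
          linarith
      _ = 1 + ε/2 := by ring
  have hrank : finrank ℝ (EuclideanSpace ℝ (Fin d)) = d := finrank_euclideanSpace_fin
  have hball : ∀ u : EuclideanSpace ℝ (Fin d), μ (ball u (ε/2)) = ENNReal.ofReal ((ε/2)^d) * μ (ball 0 1) := by
    intro u
    rw [Measure.addHaar_ball μ u (by linarith : (0:ℝ) ≤ ε/2), hrank]
  have hbigball : μ (ball (0:EuclideanSpace ℝ (Fin d)) (1 + ε/2)) = ENNReal.ofReal ((1+ε/2)^d) * μ (ball 0 1) := by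
    rw [Measure.addHaar_ball μ 0 (by linarith : (0:ℝ) ≤ 1+ε/2), hrank]
  have hmeas : μ (⋃ u ∈ S, ball u (ε/2)) = ∑ u ∈ S, μ (ball u (ε/2)) :=
    measure_biUnion_finset hdisj (fun u _ => measurableSet_ball)
  have hle : (S.card : ℝ≥0∞) * (ENNReal.ofReal ((ε/2)^d) * μ (ball 0 1))
      ≤ ENNReal.ofReal ((1+ε/2)^d) * μ (ball 0 1) := by
    calc (S.card : ℝ≥0∞) * (ENNReal.ofReal ((ε/2)^d) * μ (ball 0 1))
        = ∑ u ∈ S, μ (ball u (ε/2)) := by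
          rw [Finset.sum_congr rfl (fun u _ => hball u), Finset.sum_const, nsmul_eq_mul]
      _ = μ (⋃ u ∈ S, ball u (ε/2)) := hmeas.symm
      _ ≤ μ (ball (0:EuclideanSpace ℝ (Fin d)) (1 + ε/2)) := measure_mono hsub
      _ = ENNReal.ofReal ((1+ε/2)^d) * μ (ball 0 1) := hbigball
  have hV0 : μ (ball (0:EuclideanSpace ℝ (Fin d)) 1) ≠ 0 := (measure_ball_pos μ 0 one_pos).ne'
  have hVtop : μ (ball (0:EuclideanSpace ℝ (Fin d)) 1) ≠ ⊤ := measure_ball_lt_top.ne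
  rw [← mul_assoc] at hle
  have hle2 : (S.card : ℝ≥0∞) * ENNReal.ofReal ((ε/2)^d) ≤ ENNReal.ofReal ((1+ε/2)^d) :=
    (ENNReal.mul_le_mul_iff_left hV0 hVtop).1 hle
  have hεd : (0:ℝ) < (ε/2)^d := by positivity
  have hreal : (S.card : ℝ) * (ε/2)^d ≤ (1+ε/2)^d := by
    have := hle2
    rw [← ENNReal.ofReal_natCast, ← ENNReal.ofReal_mul (by positivity)] at this
    exact (ENNReal.ofReal_le_ofReal_iff (by positivity)).1 this
  have hdiv : (S.card : ℝ) ≤ (1+ε/2)^d / (ε/2)^d := (le_div_iff₀ hεd).2 hreal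
  calc (S.card : ℝ) ≤ (1+ε/2)^d / (ε/2)^d := hdiv
    _ = ((1+ε/2)/(ε/2))^d := (div_pow _ _ d).symm
    _ = (1 + 2/ε)^d := by
        congr 1
        field_simp
        ring

lemma net_exists (d : ℕ) (hd : 0 < d) {ε : ℝ} (hε : 0 < ε) :
    ∃ T : Finset (EuclideanSpace ℝ (Fin d)),
      (∀ u ∈ T, ‖u‖ = 1) ∧ ((T.card : ℝ) ≤ (1 + 2/ε)^d) ∧
      ∀ v : EuclideanSpace ℝ (Fin d), ‖v‖ = 1 → ∃ u ∈ T, dist v u ≤ ε := by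
  classical
  set Q : ℕ → Prop := fun k => ∃ S : Finset (EuclideanSpace ℝ (Fin d)),
    (∀ u ∈ S, ‖u‖ = 1) ∧ (∀ u ∈ S, ∀ v ∈ S, u ≠ v → ε ≤ dist u v) ∧ S.card = k with hQdef
  set M : ℕ := Nat.floor ((1 + 2/ε)^d) with hMdef
  have hQbound : ∀ k, Q k → k ≤ M := by
    rintro k ⟨S, h1, h2, h3⟩
    rw [← h3]
    exact Nat.le_floor (sep_card_bound hd hε S h1 h2)
  have hQ0 : Q 0 := ⟨∅, by simp, by simp, rfl⟩
  set N := Nat.findGreatest Q M with hNdef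
  have hQN : Q N := Nat.findGreatest_spec (Nat.zero_le M) hQ0
  obtain ⟨S, hS1, hSsep, hScard⟩ := hQN
  refine ⟨S, hS1, ?_, ?_⟩
  · rw [hScard]
    calc (N : ℝ) ≤ (M : ℝ) := by exact_mod_cast Nat.findGreatest_le M
      _ ≤ (1 + 2/ε)^d := Nat.floor_le (by positivity)
  · intro v hv
    by_contra hcon
    push_neg at hcon
    have hvS : v ∉ S := by
      intro hvS
      have := hcon v hvS
      rw [dist_self] at this
      linarith
    have hQN1 : Q (N + 1) := by
      refine ⟨insert v S, ?_, ?_, ?_⟩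
      · intro u hu
        rcases Finset.mem_insert.1 hu with rfl | hu
        · exact hv
        · exact hS1 u hu
      · intro u hu w hw huw
        rcases Finset.mem_insert.1 hu with hu' | hu'
        · rcases Finset.mem_insert.1 hw with hw' | hw'
          · exact absurd (hu'.trans hw'.symm) huw
          · subst hu'; exact le_of_lt (hcon w hw')
        · rcases Finset.mem_insert.1 hw with hw' | hw'
          · subst hw'; rw [dist_comm]; exact le_of_lt (hcon u hu')
          · exact hSsep u hu' w hw' huw
      · rw [Finset.card_insert_of_notMem hvS, hScard]
    have := Nat.le_findGreatest (hQbound _ hQN1) hQN1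
    omega

lemma sum_sq_of_norm_one {d : ℕ} (u : EuclideanSpace ℝ (Fin d)) (hu : ‖u‖ = 1) :
    ∑ l, u l ^ 2 = 1 := by
  have h := EuclideanSpace.norm_eq u
  rw [hu] at h
  have hnn : 0 ≤ ∑ l, ‖u l‖ ^ 2 := Finset.sum_nonneg fun l _ => sq_nonneg _
  have h2 : ∑ l, ‖u l‖ ^ 2 = 1 := by
    have := congrArg (fun t : ℝ => t ^ 2) h
    simp only [one_pow] at this
    rw [Real.sq_sqrt hnn] at this
    linarith [this]
  calc ∑ l, u l ^ 2 = ∑ l, ‖u l‖ ^ 2 := by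
        refine Finset.sum_congr rfl fun l _ => ?_
        rw [Real.norm_eq_abs, sq_abs]
    _ = 1 := h2

lemma abs_sum_mul_le {d : ℕ} (a c : Fin d → ℝ) :
    |∑ l, a l * c l| ≤ Real.sqrt (∑ l, a l ^ 2) * Real.sqrt (∑ l, c l ^ 2) := by
  have h := Finset.sum_mul_sq_le_sq_mul_sq Finset.univ a c
  calc |∑ l, a l * c l| = Real.sqrt ((∑ l, a l * c l) ^ 2) := (Real.sqrt_sq_eq_abs _).symm
    _ ≤ Real.sqrt ((∑ l, a l ^ 2) * ∑ l, c l ^ 2) := Real.sqrt_le_sqrt h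
    _ = Real.sqrt (∑ l, a l ^ 2) * Real.sqrt (∑ l, c l ^ 2) :=
        Real.sqrt_mul (Finset.sum_nonneg fun l _ => sq_nonneg _) _

lemma gram_hermitian {d n : ℕ} (ψ : Fin n → Fin d → ℝ) (c : ℝ) :
    ((∑ i, Matrix.vecMulVec (ψ i) (ψ i)) - c • (1 : Matrix (Fin d) (Fin d) ℝ)).IsHermitian := by
  show _ᴴ = _
  ext l l'
  simp only [Matrix.conjTranspose_apply, Matrix.sub_apply, Matrix.smul_apply, Matrix.one_apply,
    Matrix.sum_apply, Matrix.vecMulVec_apply, star_trivial, smul_eq_mul]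
  have h1 : ∑ i, ψ i l' * ψ i l = ∑ i, ψ i l * ψ i l' :=
    Finset.sum_congr rfl fun i _ => mul_comm _ _
  have h2 : (if l' = l then (1:ℝ) else 0) = if l = l' then 1 else 0 := by
    by_cases h : l = l' <;> simp [h, Ne.symm]
  rw [h1, h2]

lemma quad_form {d n : ℕ} (ψ : Fin n → Fin d → ℝ) (x : Fin d → ℝ) :
    dotProduct x ((∑ i, Matrix.vecMulVec (ψ i) (ψ i)) *ᵥ x)
      = ∑ i, (∑ l, x l * ψ i l) ^ 2 := by
  simp only [dotProduct, Matrix.mulVec, Matrix.vecMulVec_apply, Matrix.sum_apply,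
    Finset.mul_sum, Finset.sum_mul, sq]
  rw [show (∑ l : Fin d, ∑ l' : Fin d, ∑ i : Fin n, x l * (ψ i l * ψ i l' * x l'))
      = ∑ l : Fin d, ∑ i : Fin n, ∑ l' : Fin d, x l * (ψ i l * ψ i l' * x l') from
    Finset.sum_congr rfl fun l _ => Finset.sum_comm]
  rw [show (∑ l : Fin d, ∑ i : Fin n, ∑ l' : Fin d, x l * (ψ i l * ψ i l' * x l'))
      = ∑ i : Fin n, ∑ l : Fin d, ∑ l' : Fin d, x l * (ψ i l * ψ i l' * x l') from
    Finset.sum_comm]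
  refine Finset.sum_congr rfl fun i _ => Finset.sum_congr rfl fun l _ =>
    Finset.sum_congr rfl fun l' _ => by ring

lemma quad_form_id {d : ℕ} (c : ℝ) (x : Fin d → ℝ) :
    dotProduct x ((c • (1 : Matrix (Fin d) (Fin d) ℝ)) *ᵥ x) = c * ∑ l, x l ^ 2 := by
  rw [Matrix.smul_mulVec, Matrix.one_mulVec]
  simp only [dotProduct, Pi.smul_apply, smul_eq_mul, Finset.mul_sum]
  exact Finset.sum_congr rfl fun l _ => by ring

lemma key_det {d n : ℕ} (ψ : Fin n → Fin d → ℝ) (hψ : ∀ i, ∑ l, ψ i l ^ 2 ≤ 1)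
    {b : ℝ} (hb : 0 < b) (hb1 : b ≤ 1)
    (T : Finset (EuclideanSpace ℝ (Fin d)))
    (hT1 : ∀ u ∈ T, ‖u‖ = 1)
    (hTnet : ∀ v : EuclideanSpace ℝ (Fin d), ‖v‖ = 1 → ∃ u ∈ T, dist v u ≤ b/8)
    (hgood : ∀ u ∈ T, 3*(n*b)/4 ≤ ∑ i, (∑ l, u l * ψ i l)^2) :
    Matrix.PosSemidef ((∑ i, Matrix.vecMulVec (ψ i) (ψ i))
      - ((n * b / 2 : ℝ)) • (1 : Matrix (Fin d) (Fin d) ℝ)) := by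
  rw [Matrix.posSemidef_iff_dotProduct_mulVec]
  constructor
  · exact gram_hermitian ψ _
  · intro x
    rw [star_trivial, Matrix.sub_mulVec, dotProduct_sub, quad_form, quad_form_id,
      sub_nonneg]
    have key : ∀ v : EuclideanSpace ℝ (Fin d), ‖v‖ = 1 →
        n*b/2 ≤ ∑ i, (∑ l, v l * ψ i l)^2 := by
      intro v hv
      obtain ⟨u, huT, hdist⟩ := hTnet v hv
      have hu1 : ‖u‖ = 1 := hT1 u huT
      have hψs : ∀ i, Real.sqrt (∑ l, ψ i l ^ 2) ≤ 1 := by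
        intro i
        rw [show (1:ℝ) = Real.sqrt 1 from Real.sqrt_one.symm]
        exact Real.sqrt_le_sqrt (hψ i)
      have hpt : ∀ i : Fin n, (∑ l, u l * ψ i l)^2 ≤ (∑ l, v l * ψ i l)^2 + b/4 := by
        intro i
        set p := ∑ l, v l * ψ i l with hp
        set q := ∑ l, u l * ψ i l with hq
        have hdiff : |p - q| ≤ b/8 := by
          have hpq : p - q = ∑ l, (v l - u l) * ψ i l := by
            rw [hp, hq, ← Finset.sum_sub_distrib]
            exact Finset.sum_congr rfl fun l _ => by ring
          have hdvu : Real.sqrt (∑ l, (v l - u l)^2) = dist v u := by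
            rw [EuclideanSpace.dist_eq]
            congr 1
            exact Finset.sum_congr rfl fun l _ => by rw [Real.dist_eq, sq_abs]
          rw [hpq]
          calc |∑ l, (v l - u l) * ψ i l|
              ≤ Real.sqrt (∑ l, (v l - u l)^2) * Real.sqrt (∑ l, ψ i l^2) := abs_sum_mul_le _ _
            _ ≤ (b/8) * 1 := by
                refine mul_le_mul ?_ (hψs i) (Real.sqrt_nonneg _) (by linarith)
                rw [hdvu]; exact hdist
            _ = b/8 := mul_one _
        have hsum : |p + q| ≤ 2 := by
          have hpq : p + q = ∑ l, (v l + u l) * ψ i l := by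
            rw [hp, hq, ← Finset.sum_add_distrib]
            exact Finset.sum_congr rfl fun l _ => by ring
          have hnvu : Real.sqrt (∑ l, (v l + u l)^2) = ‖v + u‖ := by
            rw [EuclideanSpace.norm_eq]
            congr 1
            refine Finset.sum_congr rfl fun l _ => ?_
            rw [show (v + u) l = v l + u l from rfl, Real.norm_eq_abs, sq_abs]
          rw [hpq]
          calc |∑ l, (v l + u l) * ψ i l|
              ≤ Real.sqrt (∑ l, (v l + u l)^2) * Real.sqrt (∑ l, ψ i l^2) := abs_sum_mul_le _ _
            _ ≤ (‖v‖ + ‖u‖) * 1 := by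
                refine mul_le_mul ?_ (hψs i) (Real.sqrt_nonneg _) (by rw [hv, hu1]; norm_num)
                rw [hnvu]; exact norm_add_le v u
            _ = 2 := by rw [hv, hu1]; norm_num
        have h1 : q^2 - p^2 ≤ |p - q| * |p + q| := by
          calc q^2 - p^2 = (q-p)*(q+p) := by ring
            _ ≤ |(q-p)*(q+p)| := le_abs_self _
            _ = |p - q| * |p + q| := by rw [abs_mul, abs_sub_comm, add_comm q p]
        have h2 : |p - q| * |p + q| ≤ (b/8) * 2 :=
          mul_le_mul hdiff hsum (abs_nonneg _) (by linarith)
        nlinarith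
      have hsumpt : ∑ i, (∑ l, u l * ψ i l)^2 ≤ ∑ i, (∑ l, v l * ψ i l)^2 + n * (b/4) := by
        calc ∑ i, (∑ l, u l * ψ i l)^2
            ≤ ∑ i : Fin n, ((∑ l, v l * ψ i l)^2 + b/4) := Finset.sum_le_sum fun i _ => hpt i
          _ = ∑ i, (∑ l, v l * ψ i l)^2 + n * (b/4) := by
              rw [Finset.sum_add_distrib, Finset.sum_const, Finset.card_univ, Fintype.card_fin,
                nsmul_eq_mul]
      have hg := hgood u huT
      linarith
    rcases eq_or_ne (∑ l, x l^2) 0 with hx0 | hx0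
    · rw [hx0, mul_zero]; exact Finset.sum_nonneg fun i _ => sq_nonneg _
    · have hxpos : 0 < ∑ l, x l^2 :=
        lt_of_le_of_ne (Finset.sum_nonneg fun l _ => sq_nonneg _) (Ne.symm hx0)
      set r := Real.sqrt (∑ l, x l^2) with hr
      have hrpos : 0 < r := Real.sqrt_pos.2 hxpos
      set v : EuclideanSpace ℝ (Fin d) := (WithLp.equiv 2 (Fin d → ℝ)).symm (fun l => x l / r)
        with hvdef
      have hvl : ∀ l, v l = x l / r := fun l => rfl
      have hr2 : r^2 = ∑ l, x l^2 := Real.sq_sqrt hxpos.le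
      have hvnorm : ‖v‖ = 1 := by
        rw [EuclideanSpace.norm_eq]
        have hh : ∑ l, ‖v l‖^2 = (∑ l, x l ^2)/r^2 := by
          rw [Finset.sum_div]
          refine Finset.sum_congr rfl fun l _ => ?_
          rw [hvl, Real.norm_eq_abs, sq_abs, div_pow]
        rw [hh, hr2, div_self hx0]
        exact Real.sqrt_one
      have hkey := key v hvnorm
      have hscale : ∑ i, (∑ l, v l * ψ i l)^2 = (∑ i, (∑ l, x l * ψ i l)^2)/r^2 := by
        rw [Finset.sum_div]
        refine Finset.sum_congr rfl fun i _ => ?_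
        rw [show ∑ l, v l * ψ i l = (∑ l, x l * ψ i l)/r from by
          rw [Finset.sum_div]; exact Finset.sum_congr rfl fun l _ => by rw [hvl]; ring, div_pow]
      rw [hscale] at hkey
      calc n*b/2 * ∑ l, x l^2 = (n*b/2) * r^2 := by rw [hr2]
        _ ≤ ((∑ i, (∑ l, x l * ψ i l)^2)/r^2) * r^2 :=
            mul_le_mul_of_nonneg_right hkey (sq_nonneg r)
        _ = ∑ i, (∑ l, x l * ψ i l)^2 := div_mul_cancel₀ _ (by positivity)

lemma mean_quad {d : ℕ} (u : Fin d → ℝ) (hu : ∑ l, u l^2 = 1) {Ω : Type} [MeasurableSpace Ω]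
    (P : Measure Ω) [IsProbabilityMeasure P] (f : Ω → Fin d → ℝ) (hf : Measurable f)
    (hbd : ∀ᵐ ω ∂P, ∑ l, f ω l^2 ≤ 1) {b : ℝ}
    (hpsd : Matrix.PosSemidef ((Matrix.of fun l l' => ∫ ω, f ω l * f ω l' ∂P)
      - b • (1 : Matrix (Fin d) (Fin d) ℝ))) :
    b ≤ ∫ ω, (∑ l, u l * f ω l)^2 ∂P := by
  have hcoord : ∀ᵐ ω ∂P, ∀ l, |f ω l| ≤ 1 := by
    filter_upwards [hbd] with ω hω
    intro l
    have h1 : f ω l^2 ≤ ∑ l', f ω l'^2 :=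
      Finset.single_le_sum (fun l' _ => sq_nonneg (f ω l')) (Finset.mem_univ l)
    have h2 := h1.trans hω
    nlinarith [abs_nonneg (f ω l), sq_abs (f ω l)]
  have hint : ∀ l l', Integrable (fun ω => f ω l * f ω l') P := by
    intro l l'
    refine Integrable.mono' (integrable_const 1)
      (((measurable_pi_apply l).comp hf).mul ((measurable_pi_apply l').comp hf)).aestronglyMeasurable ?_
    filter_upwards [hcoord] with ω hω
    rw [Real.norm_eq_abs, abs_mul]
    exact mul_le_one₀ (hω l) (abs_nonneg _) (hω l')
  have h2 := hpsd.dotProduct_mulVec_nonneg u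
  rw [star_trivial, Matrix.sub_mulVec, dotProduct_sub, quad_form_id, hu, mul_one,
    sub_nonneg] at h2
  have hM : dotProduct u ((Matrix.of fun l l' => ∫ ω, f ω l * f ω l' ∂P) *ᵥ u)
      = ∫ ω, (∑ l, u l * f ω l)^2 ∂P := by
    have hinner : ∀ l, Integrable (fun ω => ∑ l', (u l * u l') * (f ω l * f ω l')) P :=
      fun l => integrable_finset_sum _ fun l' _ => ((hint l l').const_mul _)
    calc dotProduct u ((Matrix.of fun l l' => ∫ ω, f ω l * f ω l' ∂P) *ᵥ u)
        = ∑ l, ∑ l', (u l * u l') * ∫ ω, f ω l * f ω l' ∂P := by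
          simp only [dotProduct, Matrix.mulVec, Matrix.of_apply, Finset.mul_sum]
          exact Finset.sum_congr rfl fun l _ => Finset.sum_congr rfl fun l' _ => by ring
      _ = ∑ l, ∑ l', ∫ ω, (u l * u l') * (f ω l * f ω l') ∂P := by
          exact Finset.sum_congr rfl fun l _ => Finset.sum_congr rfl fun l' _ =>
            (MeasureTheory.integral_const_mul _ _).symm
      _ = ∫ ω, ∑ l, ∑ l', (u l * u l') * (f ω l * f ω l') ∂P := by
          rw [integral_finset_sum _ (fun l _ => hinner l)]
          exact Finset.sum_congr rfl fun l _ =>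
            (integral_finset_sum _ (fun l' _ => ((hint l l').const_mul _))).symm
      _ = ∫ ω, (∑ l, u l * f ω l)^2 ∂P := by
          refine integral_congr_ae (Filter.Eventually.of_forall fun ω => ?_)
          show ∑ l, ∑ l', (u l * u l') * (f ω l * f ω l') = (∑ l, u l * f ω l)^2
          rw [sq, Finset.sum_mul]
          refine Finset.sum_congr rfl fun l _ => ?_
          rw [Finset.mul_sum]
          exact Finset.sum_congr rfl fun l' _ => by ring
  rw [hM] at h2
  exact h2

lemma main_core {Ω : Type} [MeasurableSpace Ω] (P : Measure Ω) [IsProbabilityMeasure P]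
    {d n : ℕ} {b : ℝ} (hb : 0 < b) (hb1 : b ≤ 1)
    (φ : Fin n → Ω → Fin d → ℝ) (hφmeas : ∀ i, Measurable (φ i))
    (hφnorm : ∀ i, ∀ᵐ ω ∂P, ∑ l, φ i ω l ^ 2 ≤ 1)
    (T : Finset (EuclideanSpace ℝ (Fin d)))
    (hT1 : ∀ u ∈ T, ‖u‖ = 1)
    (hTnet : ∀ v : EuclideanSpace ℝ (Fin d), ‖v‖ = 1 → ∃ u ∈ T, dist v u ≤ b/8)
    {D : ℝ} (hD : 0 ≤ D)
    (hbound : P (⋃ u ∈ T, {ω | ∑ i, (∑ l, u l * φ i ω l)^2 ≤ 3*(n*b)/4})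
      ≤ ENNReal.ofReal D) :
    ENNReal.ofReal (1 - D) ≤
      P {ω | Matrix.PosSemidef ((∑ i, Matrix.vecMulVec (φ i ω) (φ i ω))
        - ((n * b / 2 : ℝ)) • (1 : Matrix (Fin d) (Fin d) ℝ))} := by
  classical
  set Bad : Set Ω := ⋃ u ∈ T, {ω | ∑ i, (∑ l, u l * φ i ω l)^2 ≤ 3*(n*b)/4} with hBad
  set N : Set Ω := {ω | ∀ i, ∑ l, φ i ω l ^ 2 ≤ 1} with hN
  have hsummeas : ∀ u : EuclideanSpace ℝ (Fin d),
      Measurable (fun ω => ∑ i, (∑ l, u l * φ i ω l)^2) := by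
    intro u
    refine Finset.measurable_sum _ fun i _ => ?_
    exact (Finset.measurable_sum _ fun l _ =>
      ((measurable_pi_apply l).comp (hφmeas i)).const_mul (u l)).pow_const 2
  have hBadMeas : MeasurableSet Bad := by
    refine Set.Finite.measurableSet_biUnion T.finite_toSet fun u _ => ?_
    exact measurableSet_le (hsummeas u) measurable_const
  have hNMeas : MeasurableSet N := by
    have : N = ⋂ i, {ω | ∑ l, φ i ω l ^ 2 ≤ 1} := by
      ext ω; simp [hN, Set.mem_iInter]
    rw [this]
    refine MeasurableSet.iInter fun i => ?_
    exact measurableSet_le (Finset.measurable_sum _ fun l _ =>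
      ((measurable_pi_apply l).comp (hφmeas i)).pow_const 2) measurable_const
  have hNc : P Nᶜ = 0 := by
    have hall : ∀ᵐ ω ∂P, ∀ i, ∑ l, φ i ω l ^ 2 ≤ 1 := ae_all_iff.2 hφnorm
    rw [ae_iff] at hall
    have hNcc : Nᶜ = {ω | ¬ ∀ i, ∑ l, φ i ω l ^ 2 ≤ 1} := by rw [hN, Set.compl_setOf]
    rw [hNcc]
    exact hall
  set G : Set Ω := N ∩ Badᶜ with hG
  have hGmeas : MeasurableSet G := hNMeas.inter hBadMeas.compl
  have hGsub : G ⊆ {ω | Matrix.PosSemidef ((∑ i, Matrix.vecMulVec (φ i ω) (φ i ω))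
        - ((n * b / 2 : ℝ)) • (1 : Matrix (Fin d) (Fin d) ℝ))} := by
    rintro ω ⟨hωN, hωBad⟩
    refine key_det (fun i => φ i ω) hωN hb hb1 T hT1 hTnet ?_
    intro u huT
    have hnotin : ω ∉ {ω | ∑ i, (∑ l, u l * φ i ω l)^2 ≤ 3*(n*b)/4} := by
      intro hmem
      exact hωBad (Set.mem_biUnion huT hmem)
    exact le_of_not_ge hnotin
  have hGc : P Gᶜ ≤ ENNReal.ofReal D := by
    have hGcs : Gᶜ = Nᶜ ∪ Bad := by rw [hG, Set.compl_inter, compl_compl]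
    rw [hGcs]
    calc P (Nᶜ ∪ Bad) ≤ P Nᶜ + P Bad := measure_union_le _ _
      _ = P Bad := by rw [hNc, zero_add]
      _ ≤ ENNReal.ofReal D := hbound
  have h1 : (1 : ℝ≥0∞) - ENNReal.ofReal D ≤ 1 - P Gᶜ := tsub_le_tsub_left hGc 1
  have h2 : (1 : ℝ≥0∞) - P Gᶜ ≤ P G := by
    refine tsub_le_iff_right.2 ?_
    calc (1 : ℝ≥0∞) = P (G ∪ Gᶜ) := by rw [Set.union_compl_self, measure_univ]
      _ ≤ P G + P Gᶜ := measure_union_le _ _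
  have h3 : ENNReal.ofReal (1 - D) ≤ 1 - ENNReal.ofReal D := by
    rw [ENNReal.ofReal_sub 1 hD, ENNReal.ofReal_one]
  calc ENNReal.ofReal (1 - D) ≤ 1 - ENNReal.ofReal D := h3
    _ ≤ 1 - P Gᶜ := h1
    _ ≤ P G := h2
    _ ≤ _ := measure_mono hGsub

lemma log43_le : Real.log (4/3) ≤ 7/24 := by
  rw [Real.log_le_iff_le_exp (by norm_num)]
  have h := Real.sum_le_exp_of_nonneg (by norm_num : (0:ℝ) ≤ 7/24) 4
  refine le_trans ?_ h
  rw [Finset.sum_range_succ, Finset.sum_range_succ, Finset.sum_range_succ,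
    Finset.sum_range_succ, Finset.sum_range_zero]
  norm_num [Nat.factorial]

set_option maxHeartbeats 1000000 in

/-- There is an absolute constant `c' > 0` such that: if
`φ_1, …, φ_n` are i.i.d. random vectors in `ℝ^d` with `‖φ_i‖ ≤ 1` almost surely and
`E[φ_1 φ_1ᵀ] ⪰ b I_d` for some `b ∈ (0,1]`, then with probability at least
`1 − d·exp(−c' n b²)`, the empirical Gram matrix satisfies
`Σ_{i=1}^n φ_i φ_iᵀ ⪰ (n b / 2) I_d`. -/
theorem empirical_gram_lower_bound :
    ∃ c' : ℝ, 0 < c' ∧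
      ∀ (d n : ℕ), 0 < n →
      ∀ (Ω : Type) [MeasurableSpace Ω] (P : Measure Ω), IsProbabilityMeasure P →
      ∀ (b : ℝ), 0 < b → b ≤ 1 →
      ∀ φ : Fin n → Ω → Fin d → ℝ,
        (∀ i, Measurable (φ i)) →
        -- independent
        iIndepFun φ P →
        -- identically distributed
        (∀ i j : Fin n, Measure.map (φ i) P = Measure.map (φ j) P) →
        -- `‖φ_i‖ ≤ 1` almost surely
        (∀ i, ∀ᵐ ω ∂P, ∑ l, φ i ω l ^ 2 ≤ 1) →
        -- `E[φ_1 φ_1ᵀ] ⪰ b I_d`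
        (∀ i, Matrix.PosSemidef
          ((Matrix.of fun l l' => ∫ ω, φ i ω l * φ i ω l' ∂P)
            - b • (1 : Matrix (Fin d) (Fin d) ℝ))) →
        ENNReal.ofReal (1 - d * Real.exp (-c' * n * b ^ 2)) ≤
          P {ω | Matrix.PosSemidef
            ((∑ i, Matrix.vecMulVec (φ i ω) (φ i ω))
              - ((n * b / 2 : ℝ)) • (1 : Matrix (Fin d) (Fin d) ℝ))} := by
  classical
  refine ⟨1/2000, by norm_num, ?_⟩
  intro d n hn Ω _ P hP b hb hb1 φ hφmeas hφindep hφident hφnorm hφcov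
  haveI := hP
  have hn1 : (1:ℝ) ≤ (n:ℝ) := by exact_mod_cast hn
  have hnb : (0:ℝ) < n * b := by positivity
  have hθ : Real.log (4/3) ≤ 7/24 := log43_le
  have hθ0 : 0 ≤ Real.log (4/3) := Real.log_nonneg (by norm_num)
  -- Chernoff bound for a fixed unit direction
  have hchern : ∀ u : EuclideanSpace ℝ (Fin d), ‖u‖ = 1 →
      P {ω | ∑ i, (∑ l, u l * φ i ω l)^2 ≤ 3*((n:ℝ)*b)/4}
        ≤ ENNReal.ofReal (Real.exp (Real.log (4/3) * (3*((n:ℝ)*b)/4) - n * b / 4)) := by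
    intro u hu
    have husq : ∑ l, u l ^ 2 = 1 := sum_sq_of_norm_one u hu
    set X : Fin n → Ω → ℝ := fun i ω => (∑ l, u l * φ i ω l)^2 with hX
    have hg : Measurable (fun w : Fin d → ℝ => (∑ l, u l * w l)^2) := by
      fun_prop
    have hXmeas : ∀ i, Measurable (X i) := fun i => hg.comp (hφmeas i)
    have hXindep : iIndepFun X P :=
      hφindep.comp (fun _ => fun w => (∑ l, u l * w l)^2) (fun _ => hg)
    have hXbdd : ∀ i, ∀ᵐ ω ∂P, X i ω ∈ Set.Icc (0:ℝ) 1 := by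
      intro i
      filter_upwards [hφnorm i] with ω hω
      refine ⟨sq_nonneg _, ?_⟩
      have h := Finset.sum_mul_sq_le_sq_mul_sq Finset.univ u (φ i ω)
      rw [husq, one_mul] at h
      exact h.trans hω
    have hXmean : ∀ i, b ≤ ∫ ω, X i ω ∂P := fun i =>
      mean_quad u husq P (φ i) (hφmeas i) (hφnorm i) (hφcov i)
    have hres := chernoff_lower P X hXmeas hXindep hXbdd hb.le hb1 hXmean (3*((n:ℝ)*b)/4)
    have hsetEq : {ω | (∑ i, X i) ω ≤ 3*((n:ℝ)*b)/4}
        = {ω | ∑ i, (∑ l, u l * φ i ω l)^2 ≤ 3*((n:ℝ)*b)/4} := by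
      ext ω; simp [Finset.sum_apply, hX]
    rw [hsetEq] at hres
    exact (ENNReal.le_ofReal_iff_toReal_le (measure_ne_top P _) (Real.exp_pos _).le).2 hres
  -- the exponent inequality (single direction / d = 1 case)
  have hexp1 : Real.log (4/3) * (3*((n:ℝ)*b)/4) - n * b / 4 ≤ -(1/2000) * n * b^2 := by
    have h1 : Real.log (4/3) * (3*((n:ℝ)*b)/4) ≤ (7/24) * (3*((n:ℝ)*b)/4) :=
      mul_le_mul_of_nonneg_right hθ (by positivity)
    nlinarith [hnb, hb1, hb.le]
  -- case d = 0
  rcases Nat.eq_zero_or_pos d with hd0 | hd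
  · subst hd0
    have hall : {ω | Matrix.PosSemidef
        ((∑ i, Matrix.vecMulVec (φ i ω) (φ i ω))
          - (((n:ℝ) * b / 2 : ℝ)) • (1 : Matrix (Fin 0) (Fin 0) ℝ))} = Set.univ := by
      ext ω
      simp only [Set.mem_setOf_eq, Set.mem_univ, iff_true]
      rw [Matrix.posSemidef_iff_dotProduct_mulVec]
      constructor
      · ext l l'; exact l.elim0
      · intro x
        show 0 ≤ dotProduct _ _
        simp [dotProduct]
    rw [hall, measure_univ]
    norm_num
  -- trace bound : d * b ≤ 1
  have hdb : (d:ℝ) * b ≤ 1 := by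
    set i₀ : Fin n := ⟨0, hn⟩
    have hs : ∀ (l : Fin d) (w : Fin d → ℝ), ∑ l', (Pi.single l (1:ℝ) : Fin d → ℝ) l' * w l' = w l := by
      intro l w
      rw [Finset.sum_eq_single l]
      · rw [Pi.single_eq_same, one_mul]
      · intro l' _ hne
        rw [Pi.single_eq_of_ne hne, zero_mul]
      · intro habs; exact absurd (Finset.mem_univ l) habs
    have husq_single : ∀ l : Fin d, ∑ l', (Pi.single l (1:ℝ) : Fin d → ℝ) l' ^ 2 = 1 := by
      intro l
      have heach : ∀ l', (Pi.single l (1:ℝ) : Fin d → ℝ) l' ^ 2 = if l' = l then 1 else 0 := by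
        intro l'
        rcases eq_or_ne l' l with rfl | h
        · rw [Pi.single_eq_same, if_pos rfl, one_pow]
        · rw [Pi.single_eq_of_ne h, if_neg h]
          norm_num
      rw [Finset.sum_congr rfl fun l' _ => heach l']
      simp
    have hdiag : ∀ l : Fin d, b ≤ ∫ ω, (φ i₀ ω l)^2 ∂P := by
      intro l
      have hm := mean_quad (Pi.single l (1:ℝ)) (husq_single l) P (φ i₀) (hφmeas i₀)
        (hφnorm i₀) (hφcov i₀)
      simpa only [hs] using hm
    have hintsq : ∀ l : Fin d, Integrable (fun ω => (φ i₀ ω l)^2) P := by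
      intro l
      refine Integrable.mono' (integrable_const 1)
        (((measurable_pi_apply l).comp (hφmeas i₀)).pow_const 2).aestronglyMeasurable ?_
      filter_upwards [hφnorm i₀] with ω hω
      rw [Real.norm_eq_abs, abs_of_nonneg (sq_nonneg _)]
      exact le_trans (Finset.single_le_sum (fun l' _ => sq_nonneg (φ i₀ ω l'))
        (Finset.mem_univ l)) hω
    calc (d:ℝ) * b = ∑ _l : Fin d, b := by
          rw [Finset.sum_const, Finset.card_univ, Fintype.card_fin, nsmul_eq_mul]
      _ ≤ ∑ l : Fin d, ∫ ω, (φ i₀ ω l)^2 ∂P := Finset.sum_le_sum fun l _ => hdiag l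
      _ = ∫ ω, ∑ l, (φ i₀ ω l)^2 ∂P := (integral_finset_sum _ fun l _ => hintsq l).symm
      _ ≤ ∫ _ω, (1:ℝ) ∂P := integral_mono_ae
            (integrable_finset_sum _ fun l _ => hintsq l) (integrable_const 1) (hφnorm i₀)
      _ = 1 := by simp
  -- case d = 1 : direct argument with the two-point net {e, e'}
  by_cases hd1 : d = 1
  · subst hd1
    set e : EuclideanSpace ℝ (Fin 1) := (WithLp.equiv 2 (Fin 1 → ℝ)).symm (fun _ => (1:ℝ))
      with hedef
    set e' : EuclideanSpace ℝ (Fin 1) := (WithLp.equiv 2 (Fin 1 → ℝ)).symm (fun _ => (-1:ℝ))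
      with he'def
    have he : ∀ l, e l = 1 := fun _ => rfl
    have he' : ∀ l, e' l = -1 := fun _ => rfl
    have hnorme : ‖e‖ = 1 := by
      rw [EuclideanSpace.norm_eq, Fin.sum_univ_one, he 0]
      norm_num
    have hnorme' : ‖e'‖ = 1 := by
      rw [EuclideanSpace.norm_eq, Fin.sum_univ_one, he' 0]
      norm_num
    set T : Finset (EuclideanSpace ℝ (Fin 1)) := {e, e'} with hT
    have hT1 : ∀ u ∈ T, ‖u‖ = 1 := by
      intro u hu
      rcases Finset.mem_insert.1 hu with rfl | hu
      · exact hnorme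
      · rw [Finset.mem_singleton.1 hu]; exact hnorme'
    have hTnet : ∀ v : EuclideanSpace ℝ (Fin 1), ‖v‖ = 1 → ∃ u ∈ T, dist v u ≤ b/8 := by
      intro v hv
      have hv1 : (v 0)^2 = 1 := by
        have := sum_sq_of_norm_one v hv
        rwa [Fin.sum_univ_one] at this
      have hfact : (v 0 - 1) * (v 0 + 1) = 0 := by nlinarith
      rcases mul_eq_zero.1 hfact with h | h
      · refine ⟨e, Finset.mem_insert_self _ _, ?_⟩
        rw [EuclideanSpace.dist_eq, Fin.sum_univ_one, he 0, Real.dist_eq,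
          show v 0 = 1 from by linarith]
        norm_num
        positivity
      · refine ⟨e', Finset.mem_insert_of_mem (Finset.mem_singleton_self _), ?_⟩
        rw [EuclideanSpace.dist_eq, Fin.sum_univ_one, he' 0, Real.dist_eq,
          show v 0 = -1 from by linarith]
        norm_num
        positivity
    have hbadeq : (⋃ u ∈ T, {ω | ∑ i, (∑ l, u l * φ i ω l)^2 ≤ 3*((n:ℝ)*b)/4})
        = {ω | ∑ i, (∑ l, e l * φ i ω l)^2 ≤ 3*((n:ℝ)*b)/4} := by
      have hsame : ∀ ω i, (∑ l, e' l * φ i ω l)^2 = (∑ l, e l * φ i ω l)^2 := by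
        intro ω i
        rw [Fin.sum_univ_one, Fin.sum_univ_one, he 0, he' 0]
        ring
      rw [hT]
      rw [Finset.set_biUnion_insert, Finset.set_biUnion_singleton]
      have : {ω | ∑ i, (∑ l, e' l * φ i ω l)^2 ≤ 3*((n:ℝ)*b)/4}
          = {ω | ∑ i, (∑ l, e l * φ i ω l)^2 ≤ 3*((n:ℝ)*b)/4} := by
        ext ω
        simp only [Set.mem_setOf_eq]
        rw [Finset.sum_congr rfl fun i _ => hsame ω i]
      rw [this, Set.union_self]
    have hbound : P (⋃ u ∈ T, {ω | ∑ i, (∑ l, u l * φ i ω l)^2 ≤ 3*((n:ℝ)*b)/4})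
        ≤ ENNReal.ofReal ((1:ℕ) * Real.exp (-(1/2000) * n * b^2)) := by
      rw [hbadeq]
      refine le_trans (hchern e hnorme) (ENNReal.ofReal_le_ofReal ?_)
      rw [Nat.cast_one, one_mul]
      exact Real.exp_le_exp.2 hexp1
    have := main_core P hb hb1 φ hφmeas hφnorm T hT1 hTnet
      (by positivity : (0:ℝ) ≤ (1:ℕ) * Real.exp (-(1/2000) * n * b^2)) hbound
    exact this
  -- case d ≥ 2
  have hd2 : 2 ≤ d := by omega
  have hd2r : (2:ℝ) ≤ (d:ℝ) := by exact_mod_cast hd2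
  have hdpos : (0:ℝ) < (d:ℝ) := by linarith
  by_cases hreg : 64 * ((d:ℝ) * Real.log (17/b)) ≤ n * b
  · -- good regime: net argument
    obtain ⟨T, hT1, hTcard, hTnet⟩ := net_exists d hd (show (0:ℝ) < b/8 by linarith)
    have hcardr : (T.card:ℝ) * Real.exp (Real.log (4/3) * (3*((n:ℝ)*b)/4) - n * b / 4)
        ≤ (d:ℝ) * Real.exp (-(1/2000) * n * b^2) := by
      have h17 : 1 + 2/(b/8) ≤ 17/b := by
        have h1b : (1:ℝ) ≤ 1/b := by rw [le_div_iff₀ hb]; linarith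
        have heq : 2/(b/8) = 16/b := by rw [div_div_eq_mul_div]; norm_num
        have heq2 : (17:ℝ)/b = 1/b + 16/b := by ring
        rw [heq, heq2]
        linarith
      have hcard2 : (T.card:ℝ) ≤ (17/b)^d := by
        refine hTcard.trans ?_
        exact pow_le_pow_left₀ (by positivity) h17 d
      have hpow : ((17:ℝ)/b)^d = Real.exp (d * Real.log (17/b)) := by
        rw [← Real.exp_log (show (0:ℝ) < (17/b)^d by positivity), Real.log_pow]
      have hexp2 : (d:ℝ) * Real.log (17/b) + (Real.log (4/3) * (3*((n:ℝ)*b)/4) - n * b / 4)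
          ≤ -(1/2000) * n * b^2 := by
        have hA : (d:ℝ) * Real.log (17/b) ≤ n * b / 64 := by linarith
        have h1 : Real.log (4/3) * (3*((n:ℝ)*b)/4) ≤ (7/24) * (3*((n:ℝ)*b)/4) :=
          mul_le_mul_of_nonneg_right hθ (by positivity)
        have hb2 : (n:ℝ) * b^2 ≤ (n:ℝ) * b := by nlinarith [hnb, hb1, hb.le]
        linarith
      calc (T.card:ℝ) * Real.exp (Real.log (4/3) * (3*((n:ℝ)*b)/4) - n * b / 4)
          ≤ (17/b)^d * Real.exp (Real.log (4/3) * (3*((n:ℝ)*b)/4) - n * b / 4) :=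
            mul_le_mul_of_nonneg_right hcard2 (Real.exp_pos _).le
        _ = Real.exp ((d:ℝ) * Real.log (17/b) + (Real.log (4/3) * (3*((n:ℝ)*b)/4) - n * b / 4)) := by
            rw [hpow, ← Real.exp_add]
        _ ≤ Real.exp (-(1/2000) * n * b^2) := Real.exp_le_exp.2 hexp2
        _ ≤ (d:ℝ) * Real.exp (-(1/2000) * n * b^2) := by
            nlinarith [Real.exp_pos (-(1/2000) * n * b^2)]
    have hbound : P (⋃ u ∈ T, {ω | ∑ i, (∑ l, u l * φ i ω l)^2 ≤ 3*((n:ℝ)*b)/4})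
        ≤ ENNReal.ofReal ((d:ℝ) * Real.exp (-(1/2000) * n * b^2)) := by
      calc P (⋃ u ∈ T, {ω | ∑ i, (∑ l, u l * φ i ω l)^2 ≤ 3*((n:ℝ)*b)/4})
          ≤ ∑ u ∈ T, P {ω | ∑ i, (∑ l, u l * φ i ω l)^2 ≤ 3*((n:ℝ)*b)/4} :=
            measure_biUnion_finset_le T _
        _ ≤ ∑ _u ∈ T, ENNReal.ofReal
              (Real.exp (Real.log (4/3) * (3*((n:ℝ)*b)/4) - n * b / 4)) :=
            Finset.sum_le_sum fun u hu => hchern u (hT1 u hu)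
        _ = (T.card : ℝ≥0∞) * ENNReal.ofReal
              (Real.exp (Real.log (4/3) * (3*((n:ℝ)*b)/4) - n * b / 4)) := by
            rw [Finset.sum_const, nsmul_eq_mul]
        _ = ENNReal.ofReal ((T.card:ℝ) * Real.exp (Real.log (4/3) * (3*((n:ℝ)*b)/4) - n * b / 4)) := by
            rw [ENNReal.ofReal_mul (Nat.cast_nonneg _), ENNReal.ofReal_natCast]
        _ ≤ ENNReal.ofReal ((d:ℝ) * Real.exp (-(1/2000) * n * b^2)) :=
            ENNReal.ofReal_le_ofReal hcardr
    exact main_core P hb hb1 φ hφmeas hφnorm T hT1 hTnet (by positivity) hbound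
  · -- degenerate regime: the stated lower bound is ≤ 0
    push_neg at hreg
    have hlogd2 : Real.log 2 ≤ Real.log d := Real.log_le_log (by norm_num) hd2r
    have hlog2 : (0.6931471803:ℝ) < Real.log 2 := Real.log_two_gt_d9
    have hlogd0 : 0 ≤ Real.log d := by linarith
    set A : ℝ := (d:ℝ) * b with hA
    have hA0 : 0 < A := by positivity
    have hA1 : A ≤ 1 := hdb
    have hlog17 : Real.log 17 ≤ 16 := by
      have := Real.log_le_sub_one_of_pos (show (0:ℝ) < 17 by norm_num)
      linarith
    have hlog17b : Real.log (17/b) = Real.log 17 - Real.log b :=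
      Real.log_div (by norm_num) (ne_of_gt hb)
    have hlogA : Real.log A = Real.log d + Real.log b :=
      Real.log_mul (ne_of_gt hdpos) (ne_of_gt hb)
    have hAlogA : A * (-(Real.log A)) ≤ 1 - A := by
      have h := Real.log_le_sub_one_of_pos (show 0 < 1/A by positivity)
      rw [one_div, Real.log_inv] at h
      have h2 := mul_le_mul_of_nonneg_left h hA0.le
      have heq : A * (A⁻¹ - 1) = 1 - A := by field_simp
      linarith [heq ▸ h2]
    have hAlog17 : A * Real.log 17 ≤ 16 := by
      have hl17 : 0 ≤ Real.log 17 := Real.log_nonneg (by norm_num)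
      nlinarith
    have hAlogd : A * Real.log d ≤ Real.log d := by nlinarith
    have hsum : (d:ℝ) * b * Real.log (17/b) ≤ 17 + Real.log d := by
      have hexpand : (d:ℝ) * b * Real.log (17/b)
          = A * Real.log 17 + A * Real.log d + A * (-(Real.log A)) := by
        rw [hlog17b, hlogA]; ring
      rw [hexpand]
      linarith
    have hnb2 : (n:ℝ) * b^2 ≤ 64 * (17 + Real.log d) := by
      have := mul_lt_mul_of_pos_right hreg hb
      calc (n:ℝ) * b^2 = n * b * b := by ring
        _ ≤ 64 * ((d:ℝ) * Real.log (17/b)) * b := this.le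
        _ = 64 * ((d:ℝ) * b * Real.log (17/b)) := by ring
        _ ≤ 64 * (17 + Real.log d) := by linarith
    have hc'nb : (1/2000:ℝ) * (n * b^2) ≤ Real.log d := by
      nlinarith
    have hge1 : (1:ℝ) ≤ (d:ℝ) * Real.exp (-(1/2000) * n * b^2) := by
      have hmon : Real.exp (-(Real.log d)) ≤ Real.exp (-(1/2000) * n * b^2) :=
        Real.exp_le_exp.2 (by nlinarith)
      have hinv : Real.exp (-(Real.log d)) = ((d:ℝ))⁻¹ := by
        rw [Real.exp_neg, Real.exp_log hdpos]
      calc (1:ℝ) = (d:ℝ) * ((d:ℝ))⁻¹ := by rw [mul_inv_cancel₀ (ne_of_gt hdpos)]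
        _ = (d:ℝ) * Real.exp (-(Real.log d)) := by rw [hinv]
        _ ≤ (d:ℝ) * Real.exp (-(1/2000) * n * b^2) :=
            mul_le_mul_of_nonneg_left hmon hdpos.le
    have h0 : ENNReal.ofReal (1 - (d:ℝ) * Real.exp (-(1/2000) * n * b^2)) = 0 :=
      ENNReal.ofReal_eq_zero.2 (by linarith)
    rw [h0]
    exact zero_le

end
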